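/- Let L be an arrangement of n lines in the plane such that no six of them are tangent to a common conic (in particular no six are mutually parallel, and no six pass through one point). Then there exist Ω(n^{1/5}) lines of L such that all triangles determined by triples among them have pairwise distinct areas. -/

import Mathlib

open scoped Classical

/-- A line in the plane given by the equation `a·x + b·y = c` with `(a,b) ≠ (0,0)`. -/
structure Line where
  a : ℝ
  b : ℝ
  c : ℝ
  hab : (a, b) ≠ (0, 0)

namespace Line

/-- The set of points of a line. -/
def pts (L : Line) : Set (ℝ × ℝ) := {p | L.a * p.1 + L.b * p.2 = L.c}

/-- The determinant of the directions of two lines. -/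
def lineDet (L M : Line) : ℝ := L.a * M.b - L.b * M.a

/-- Two lines are parallel (possibly equal) when their directions are proportional. -/
def Parallel (L M : Line) : Prop := lineDet L M = 0

/-- The intersection point of two non-parallel lines. -/
noncomputable def inter (L M : Line) : ℝ × ℝ :=
  ((L.c * M.b - M.c * L.b) / lineDet L M, (L.a * M.c - M.a * L.c) / lineDet L M)

end Line

/-- Standard Euclidean area of the triangle with vertices `p`, `q`, `r`. -/
noncomputable def triangleArea (p q r : ℝ × ℝ) : ℝ :=
  |(q.1 - p.1) * (r.2 - p.2) - (r.1 - p.1) * (q.2 - p.2)| / 2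

/-- The area of the triangle determined by three (pairwise non-parallel) lines. -/
noncomputable def triArea (L M N : Line) : ℝ :=
  triangleArea (Line.inter L M) (Line.inter L N) (Line.inter M N)

/-- Three lines form a (non-degenerate) triangle when they are pairwise
non-parallel and not concurrent. -/
def FormsTriangle (L M N : Line) : Prop :=
  ¬ Line.Parallel L M ∧ ¬ Line.Parallel L N ∧ ¬ Line.Parallel M N ∧
    Line.inter L M ∉ N.pts

/-- The open region bounded by the triangle formed by three lines: the interior
of the convex hull of the three pairwise intersection points. -/
noncomputable def openTriangle (L M N : Line) : Set (ℝ × ℝ) :=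
  interior (convexHull ℝ {Line.inter L M, Line.inter L N, Line.inter M N})

/-- A family of lines is in general position if no six (distinct) of its
members are tangent to a common conic.  Dually, the tangent lines of a conic
(including the degenerate cases: a point, i.e. a pencil of concurrent lines,
and tangency at infinity, i.e. parallelism) are the lines whose coefficient
triples `(a,b,c)` satisfy a common nonzero homogeneous quadratic equation; so
the condition says no nonzero quadratic form on coefficient space vanishes on
six distinct members of the family. -/
def NoSixTangentToConic (F : Finset Line) : Prop :=
  ¬ ∃ A B C D E G : ℝ, (A, B, C, D, E, G) ≠ (0, 0, 0, 0, 0, 0) ∧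
    ∃ S : Finset Line, S ⊆ F ∧ S.card = 6 ∧
      ∀ l ∈ S, A * l.a ^ 2 + B * l.b ^ 2 + C * l.c ^ 2 +
        D * l.a * l.b + E * l.a * l.c + G * l.b * l.c = 0

namespace St15

noncomputable def qval (A B C D E G : ℝ) (l : Line) : ℝ :=
  A * l.a ^ 2 + B * l.b ^ 2 + C * l.c ^ 2 + D * l.a * l.b + E * l.a * l.c + G * l.b * l.c

lemma card_conic_le {F : Finset Line} (hF : NoSixTangentToConic F)
    {A B C D E G : ℝ} (h0 : (A, B, C, D, E, G) ≠ ((0:ℝ), (0:ℝ), (0:ℝ), (0:ℝ), (0:ℝ), (0:ℝ))) :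
    (F.filter (fun l => qval A B C D E G l = 0)).card ≤ 5 := by
  by_contra h
  push_neg at h
  obtain ⟨S, hS, hcard⟩ := Finset.exists_subset_card_eq (show 6 ≤ _ from h)
  exact hF ⟨A, B, C, D, E, G, h0, S, hS.trans (Finset.filter_subset _ _), hcard,
    fun l hl => (Finset.mem_filter.mp (hS hl)).2⟩

/-- determinant of the 3×3 coefficient matrix -/
noncomputable def dd (L M N : Line) : ℝ :=
  N.a * (L.b * M.c - L.c * M.b) + N.b * (L.c * M.a - L.a * M.c) + N.c * (L.a * M.b - L.b * M.a)

lemma area_formula (L M N : Line) (h1 : ¬ L.Parallel M) (h2 : ¬ L.Parallel N)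
    (h3 : ¬ M.Parallel N) :
    triArea L M N = dd L M N ^ 2 / (2 * |Line.lineDet L M * Line.lineDet L N * Line.lineDet M N|) := by
  have d1 : Line.lineDet L M ≠ 0 := h1
  have d2 : Line.lineDet L N ≠ 0 := h2
  have d3 : Line.lineDet M N ≠ 0 := h3
  have key : ((Line.inter L N).1 - (Line.inter L M).1) * ((Line.inter M N).2 - (Line.inter L M).2) -
      ((Line.inter M N).1 - (Line.inter L M).1) * ((Line.inter L N).2 - (Line.inter L M).2)
      = dd L M N ^ 2 / (Line.lineDet L M * Line.lineDet L N * Line.lineDet M N) := by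
    simp only [Line.inter, dd] at *
    field_simp
    simp only [Line.lineDet]
    ring
  unfold triArea triangleArea
  rw [key, abs_div, abs_pow, sq_abs, div_div]
  ring_nf

-- coefficients of the conic (in N) given by dd² - 2vs·(dLM dLN dMN) = 0
noncomputable def cA (L M : Line) (v s : ℝ) : ℝ :=
  (L.b * M.c - L.c * M.b) ^ 2 - 2 * v * s * (L.a * M.b - L.b * M.a) * (L.b * M.b)
noncomputable def cB (L M : Line) (v s : ℝ) : ℝ :=
  (L.c * M.a - L.a * M.c) ^ 2 - 2 * v * s * (L.a * M.b - L.b * M.a) * (L.a * M.a)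
noncomputable def cC (L M : Line) : ℝ := (L.a * M.b - L.b * M.a) ^ 2
noncomputable def cD (L M : Line) (v s : ℝ) : ℝ :=
  2 * (L.b * M.c - L.c * M.b) * (L.c * M.a - L.a * M.c) +
    2 * v * s * (L.a * M.b - L.b * M.a) * (L.a * M.b + L.b * M.a)
noncomputable def cE (L M : Line) : ℝ := 2 * (L.b * M.c - L.c * M.b) * (L.a * M.b - L.b * M.a)
noncomputable def cG (L M : Line) : ℝ := 2 * (L.c * M.a - L.a * M.c) * (L.a * M.b - L.b * M.a)

lemma qval_expand (L M : Line) (v s : ℝ) (N : Line) :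
    qval (cA L M v s) (cB L M v s) (cC L M) (cD L M v s) (cE L M) (cG L M) N
      = dd L M N ^ 2 - 2 * v * s * (Line.lineDet L M * Line.lineDet L N * Line.lineDet M N) := by
  simp only [qval, cA, cB, cC, cD, cE, cG, dd, Line.lineDet]
  ring

lemma card_third_le {F : Finset Line} (hF : NoSixTangentToConic F) {L M : Line}
    (hLM : ¬ L.Parallel M) (v : ℝ) :
    (F.filter (fun N => ¬ L.Parallel N ∧ ¬ M.Parallel N ∧ triArea L M N = v)).card ≤ 10 := by
  have hZ : cC L M ≠ 0 := pow_ne_zero 2 hLM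
  have hne : ∀ s : ℝ, (cA L M v s, cB L M v s, cC L M, cD L M v s, cE L M, cG L M) ≠
      ((0:ℝ), (0:ℝ), (0:ℝ), (0:ℝ), (0:ℝ), (0:ℝ)) := by
    intro s h
    apply hZ
    simpa using congrArg (fun t => t.2.2.1) h
  have hsub : F.filter (fun N => ¬ L.Parallel N ∧ ¬ M.Parallel N ∧ triArea L M N = v) ⊆
      F.filter (fun l => qval (cA L M v 1) (cB L M v 1) (cC L M) (cD L M v 1) (cE L M) (cG L M) l = 0)
      ∪ F.filter (fun l => qval (cA L M v (-1)) (cB L M v (-1)) (cC L M) (cD L M v (-1)) (cE L M) (cG L M) l = 0) := by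
    intro N hN
    rw [Finset.mem_filter] at hN
    obtain ⟨hNF, h2, h3, hv⟩ := hN
    have hf := area_formula L M N hLM h2 h3
    rw [hv] at hf
    have hprod : Line.lineDet L M * Line.lineDet L N * Line.lineDet M N ≠ 0 :=
      mul_ne_zero (mul_ne_zero hLM h2) h3
    have habs : |Line.lineDet L M * Line.lineDet L N * Line.lineDet M N| ≠ 0 := abs_ne_zero.mpr hprod
    have hsq : dd L M N ^ 2 = 2 * v * |Line.lineDet L M * Line.lineDet L N * Line.lineDet M N| := by
      field_simp at hf
      linarith [hf]
    rcases abs_choice (Line.lineDet L M * Line.lineDet L N * Line.lineDet M N) with h | h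
    · apply Finset.mem_union_left
      rw [Finset.mem_filter]
      refine ⟨hNF, ?_⟩
      rw [qval_expand, hsq, h]; ring
    · apply Finset.mem_union_right
      rw [Finset.mem_filter]
      refine ⟨hNF, ?_⟩
      rw [qval_expand, hsq, h]; ring
  calc _ ≤ _ := Finset.card_le_card hsub
    _ ≤ _ + _ := Finset.card_union_le _ _
    _ ≤ 10 := by
        have := card_conic_le hF (hne 1)
        have := card_conic_le hF (hne (-1))
        omega

/-- parallel class bound -/
lemma card_parallel_le {F : Finset Line} (hF : NoSixTangentToConic F) (L : Line) :
    (F.filter (fun M => L.Parallel M)).card ≤ 5 := by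
  have h0 : ¬ (L.a = 0 ∧ L.b = 0) := by
    intro h; exact L.hab (by rw [h.1, h.2])
  have hne : ((L.b ^ 2 : ℝ), (L.a ^ 2 : ℝ), (0:ℝ), (-(2 * L.a * L.b) : ℝ), (0:ℝ), (0:ℝ)) ≠
      ((0:ℝ), (0:ℝ), (0:ℝ), (0:ℝ), (0:ℝ), (0:ℝ)) := by
    intro h
    have h1 := congrArg (fun t => t.1) h
    have h2 := congrArg (fun t => t.2.1) h
    simp at h1 h2
    exact h0 ⟨h2, h1⟩
  have hsub : F.filter (fun M => L.Parallel M) ⊆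
      F.filter (fun l => qval (L.b ^ 2) (L.a ^ 2) 0 (-(2 * L.a * L.b)) 0 0 l = 0) := by
    intro M hM
    rw [Finset.mem_filter] at hM ⊢
    refine ⟨hM.1, ?_⟩
    have hpar : L.a * M.b - L.b * M.a = 0 := hM.2
    have : qval (L.b ^ 2) (L.a ^ 2) 0 (-(2 * L.a * L.b)) 0 0 M = (L.a * M.b - L.b * M.a) ^ 2 := by
      simp only [qval]; ring
    rw [this, hpar]; ring
  exact le_trans (Finset.card_le_card hsub) (card_conic_le hF hne)

noncomputable def dirn (L : Line) : ℝ × ℝ := if L.a = 0 then (0, 1) else (1, L.b / L.a)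

lemma parallel_iff_dirn (L M : Line) : L.Parallel M ↔ dirn L = dirn M := by
  have hL : L.a = 0 → L.b ≠ 0 := by
    intro h hb; exact L.hab (by rw [h, hb])
  have hM : M.a = 0 → M.b ≠ 0 := by
    intro h hb; exact M.hab (by rw [h, hb])
  unfold Line.Parallel Line.lineDet dirn
  by_cases hLa : L.a = 0 <;> by_cases hMa : M.a = 0
  · rw [if_pos hLa, if_pos hMa]
    constructor
    · intro _; rfl
    · intro _; rw [hLa, hMa]; ring
  · rw [if_pos hLa, if_neg hMa]
    constructor
    · intro h
      exfalso
      rw [hLa] at h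
      have : L.b * M.a = 0 := by linarith
      rcases mul_eq_zero.mp this with h' | h'
      exacts [hL hLa h', hMa h']
    · intro h
      exfalso
      have := congrArg Prod.fst h
      norm_num at this
  · rw [if_neg hLa, if_pos hMa]
    constructor
    · intro h
      exfalso
      rw [hMa] at h
      have : L.a * M.b = 0 := by linarith
      rcases mul_eq_zero.mp this with h' | h'
      exacts [hLa h', hM hMa h']
    · intro h; exfalso; have := congrArg Prod.fst h; norm_num at this
  · rw [if_neg hLa, if_neg hMa]
    constructor
    · intro h
      have : L.b / L.a = M.b / M.a := by
        rw [div_eq_div_iff hLa hMa]; linarith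
      rw [this]
    · intro h
      have h2 := congrArg Prod.snd h
      simp only at h2
      rw [div_eq_div_iff hLa hMa] at h2
      linarith

lemma extract_dirs {F : Finset Line} (hF : NoSixTangentToConic F) :
    ∃ F' ⊆ F, F.card ≤ 5 * F'.card ∧
      ∀ l₁ ∈ F', ∀ l₂ ∈ F', l₁ ≠ l₂ → ¬ l₁.Parallel l₂ := by
  classical
  set I := F.image dirn with hI
  have hsec : ∀ y ∈ I, ∃ l, l ∈ F ∧ dirn l = y := by
    intro y hy; exact Finset.mem_image.mp hy
  choose sec hsecF hsecd using hsec
  refine ⟨I.attach.image (fun y => sec y.1 y.2), ?_, ?_, ?_⟩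
  · intro l hl
    obtain ⟨y, _, rfl⟩ := Finset.mem_image.mp hl
    exact hsecF _ _
  · have hcard : (I.attach.image (fun y => sec y.1 y.2)).card = I.card := by
      rw [Finset.card_image_of_injOn, Finset.card_attach]
      intro y _ z _ h
      apply Subtype.ext
      rw [← hsecd y.1 y.2, ← hsecd z.1 z.2]
      exact congrArg dirn h
    rw [hcard]
    apply Finset.card_le_mul_card_image (f := dirn)
    intro y hy
    obtain ⟨l₀, hl₀F, hl₀d⟩ := Finset.mem_image.mp hy
    have hsub : F.filter (fun x => dirn x = y) ⊆ F.filter (fun M => l₀.Parallel M) := by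
      intro M hM
      rw [Finset.mem_filter] at hM ⊢
      exact ⟨hM.1, (parallel_iff_dirn l₀ M).mpr (by rw [hl₀d, hM.2])⟩
    exact le_trans (Finset.card_le_card hsub) (card_parallel_le hF l₀)
  · intro l₁ h₁ l₂ h₂ hne hpar
    obtain ⟨y, _, rfl⟩ := Finset.mem_image.mp h₁
    obtain ⟨z, _, rfl⟩ := Finset.mem_image.mp h₂
    have : y.1 = z.1 := by
      rw [← hsecd y.1 y.2, ← hsecd z.1 z.2]
      exact (parallel_iff_dirn _ _).mp hpar
    exact hne (congrArg (fun (w : { x // x ∈ I }) => sec w.1 w.2) (Subtype.ext this))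

/-- symmetries of triArea -/
lemma inter_comm (L M : Line) : Line.inter L M = Line.inter M L := by
  unfold Line.inter Line.lineDet
  have h1 : M.a * L.b - M.b * L.a = -(L.a * M.b - L.b * M.a) := by ring
  have h2 : M.c * L.b - L.c * M.b = -(L.c * M.b - M.c * L.b) := by ring
  have h3 : M.a * L.c - L.a * M.c = -(L.a * M.c - M.a * L.c) := by ring
  rw [Prod.ext_iff]
  constructor <;> simp only [h1, h2, h3, neg_div_neg_eq]

lemma triangleArea_comm12 (p q r : ℝ × ℝ) : triangleArea p q r = triangleArea q p r := by
  unfold triangleArea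
  rw [div_left_inj' (by norm_num : (2:ℝ) ≠ 0)]
  rw [← abs_neg]; congr 1; ring

lemma triangleArea_comm23 (p q r : ℝ × ℝ) : triangleArea p q r = triangleArea p r q := by
  unfold triangleArea
  rw [div_left_inj' (by norm_num : (2:ℝ) ≠ 0)]
  rw [← abs_neg]; congr 1; ring

lemma triArea_swap23 (L M N : Line) : triArea L M N = triArea L N M := by
  unfold triArea
  rw [inter_comm N M, triangleArea_comm12]

lemma triArea_swap12 (L M N : Line) : triArea L M N = triArea M L N := by
  unfold triArea
  rw [inter_comm M L]
  rw [triangleArea_comm23 (L.inter M) (L.inter N) (M.inter N)]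

lemma triArea_cyc (L M N : Line) : triArea L M N = triArea M N L := by
  rw [triArea_swap12, triArea_swap23]

lemma weight_sum {α : Type*} [DecidableEq α] (U : Finset α) (p : ℝ) :
    ∑ A ∈ U.powerset, p ^ A.card * (1 - p) ^ (U.card - A.card) = 1 := by
  have h := Finset.prod_add (fun _ : α => p) (fun _ : α => 1 - p) U
  simp only [Finset.prod_const] at h
  have hL : (p + (1 - p)) = 1 := by ring
  rw [hL, one_pow] at h
  have h2 : ∑ A ∈ U.powerset, p ^ A.card * (1 - p) ^ (U.card - A.card)
      = ∑ A ∈ U.powerset, p ^ A.card * (1 - p) ^ (U \ A).card :=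
    Finset.sum_congr rfl (fun t ht => by rw [Finset.card_sdiff_of_subset (Finset.mem_powerset.mp ht)])
  rw [h2, ← h]

lemma weight_sum_supset {α : Type*} [DecidableEq α] (V : Finset α) (p : ℝ) (b : Finset α)
    (hb : b ⊆ V) :
    ∑ A ∈ V.powerset.filter (fun A => b ⊆ A), p ^ A.card * (1 - p) ^ (V.card - A.card)
      = p ^ b.card := by
  have key : ∑ B ∈ (V \ b).powerset, p ^ (B ∪ b).card * (1 - p) ^ (V.card - (B ∪ b).card)
      = p ^ b.card := by
    have : ∀ B ∈ (V \ b).powerset, p ^ (B ∪ b).card * (1 - p) ^ (V.card - (B ∪ b).card)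
        = p ^ b.card * (p ^ B.card * (1 - p) ^ ((V \ b).card - B.card)) := by
      intro B hB
      have hBsub : B ⊆ V \ b := Finset.mem_powerset.mp hB
      have hdisj : Disjoint B b := Finset.disjoint_of_subset_left hBsub (Finset.sdiff_disjoint)
      have hcard : (B ∪ b).card = B.card + b.card := Finset.card_union_of_disjoint hdisj
      have hVb : (V \ b).card = V.card - b.card := Finset.card_sdiff_of_subset hb
      have hbV : b.card ≤ V.card := Finset.card_le_card hb
      have hBV : B.card ≤ V.card - b.card := hVb ▸ Finset.card_le_card hBsub
      rw [hcard]
      have : V.card - (B.card + b.card) = (V \ b).card - B.card := by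
        rw [hVb]; omega
      rw [this, pow_add]
      ring
    rw [Finset.sum_congr rfl this, ← Finset.mul_sum, weight_sum, mul_one]
  rw [← key]
  apply Finset.sum_nbij' (fun A => A \ b) (fun B => B ∪ b)
  · intro A hA
    rw [Finset.mem_filter, Finset.mem_powerset] at hA
    rw [Finset.mem_powerset]
    exact Finset.sdiff_subset_sdiff hA.1 (le_refl _)
  · intro B hB
    rw [Finset.mem_powerset] at hB
    rw [Finset.mem_filter, Finset.mem_powerset]
    constructor
    · exact Finset.union_subset (hB.trans (Finset.sdiff_subset)) hb
    · exact Finset.subset_union_right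
  · intro A hA
    rw [Finset.mem_filter, Finset.mem_powerset] at hA
    exact Finset.sdiff_union_of_subset hA.2
  · intro B hB
    rw [Finset.mem_powerset] at hB
    apply Finset.union_sdiff_cancel_right
    exact Finset.disjoint_of_subset_left hB (Finset.sdiff_disjoint)
  · intro A hA
    rw [Finset.mem_filter, Finset.mem_powerset] at hA
    rw [Finset.sdiff_union_of_subset hA.2]

lemma averaging {α ι : Type*} [DecidableEq α] [DecidableEq ι] (V : Finset α) (W : Finset ι)
    (supp : ι → Finset α) (p : ℝ) (hp0 : 0 < p) (hp1 : p < 1)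
    (hsub : ∀ i ∈ W, supp i ⊆ V) (hne : ∀ i ∈ W, (supp i).Nonempty) :
    ∃ S ⊆ V, p * V.card - (∑ i ∈ W, p ^ (supp i).card) ≤ (S.card : ℝ) ∧
      ∀ i ∈ W, ¬ supp i ⊆ S := by
  classical
  set w : Finset α → ℝ := fun A => p ^ A.card * (1 - p) ^ (V.card - A.card) with hw
  have hwpos : ∀ A, 0 < w A := fun A =>
    mul_pos (pow_pos hp0 _) (pow_pos (by linarith) _)
  -- expected size
  have hsize : ∑ A ∈ V.powerset, w A * A.card = p * V.card := by
    have hrw : ∀ A ∈ V.powerset, w A * A.card = ∑ x ∈ V, (if ({x} : Finset α) ⊆ A then w A else 0) := by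
      intro A hA
      rw [Finset.mem_powerset] at hA
      rw [← Finset.sum_filter, Finset.sum_const]
      have : V.filter (fun x => ({x} : Finset α) ⊆ A) = A := by
        ext x
        simp only [Finset.mem_filter, Finset.singleton_subset_iff]
        exact ⟨fun h => h.2, fun h => ⟨hA h, h⟩⟩
      rw [this]
      ring
    rw [Finset.sum_congr rfl hrw, Finset.sum_comm]
    have : ∀ x ∈ V, ∑ A ∈ V.powerset, (if ({x} : Finset α) ⊆ A then w A else 0) = p := by
      intro x hx
      rw [← Finset.sum_filter]
      have := weight_sum_supset V p {x} (Finset.singleton_subset_iff.mpr hx)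
      rw [← hw] at this
      rw [this, Finset.card_singleton, pow_one]
    rw [Finset.sum_congr rfl this, Finset.sum_const]
    ring
  -- expected number of bad events
  have hbad : ∑ A ∈ V.powerset, w A * ((W.filter (fun i => supp i ⊆ A)).card : ℝ)
      = ∑ i ∈ W, p ^ (supp i).card := by
    have hrw : ∀ A ∈ V.powerset, w A * ((W.filter (fun i => supp i ⊆ A)).card : ℝ)
        = ∑ i ∈ W, (if supp i ⊆ A then w A else 0) := by
      intro A _
      rw [← Finset.sum_filter, Finset.sum_const]
      ring
    rw [Finset.sum_congr rfl hrw, Finset.sum_comm]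
    apply Finset.sum_congr rfl
    intro i hi
    rw [← Finset.sum_filter]
    have := weight_sum_supset V p (supp i) (hsub i hi)
    rw [← hw] at this
    rw [this]
  -- existence of a good A
  set t : ℝ := p * V.card - ∑ i ∈ W, p ^ (supp i).card with ht
  have hexists : ∃ A ∈ V.powerset, t ≤ (A.card : ℝ) - ((W.filter (fun i => supp i ⊆ A)).card : ℝ) := by
    by_contra hcon
    push_neg at hcon
    have hlt : ∑ A ∈ V.powerset, w A * ((A.card : ℝ) - ((W.filter (fun i => supp i ⊆ A)).card : ℝ))
        < ∑ A ∈ V.powerset, w A * t := by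
      apply Finset.sum_lt_sum_of_nonempty
      · exact Finset.powerset_nonempty V
      · intro A hA
        exact (mul_lt_mul_iff_right₀ (hwpos A)).mpr (hcon A hA)
    have h1 : ∑ A ∈ V.powerset, w A * ((A.card : ℝ) - ((W.filter (fun i => supp i ⊆ A)).card : ℝ)) = t := by
      simp only [mul_sub]
      rw [Finset.sum_sub_distrib, hsize, hbad]
    have h2 : ∑ A ∈ V.powerset, w A * t = t := by
      rw [← Finset.sum_mul]
      have := weight_sum V p
      rw [← hw] at this
      rw [this, one_mul]
    rw [h1, h2] at hlt
    exact lt_irrefl _ hlt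
  obtain ⟨A, hA, hgood⟩ := hexists
  rw [Finset.mem_powerset] at hA
  -- deletion
  set bad := W.filter (fun i => supp i ⊆ A) with hbadset
  set D := bad.biUnion (fun i => if h : (supp i).Nonempty then {h.choose} else ∅) with hD
  refine ⟨A \ D, (Finset.sdiff_subset).trans hA, ?_, ?_⟩
  · have hDcard : D.card ≤ bad.card := by
      apply le_trans (Finset.card_biUnion_le)
      apply le_trans (Finset.sum_le_sum (fun i _ => ?_)) (by rw [Finset.sum_const, smul_eq_mul, mul_one])
      split
      · exact le_of_eq (Finset.card_singleton _)
      · simp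
    have h1 : (A.card : ℝ) ≤ ((A \ D).card : ℝ) + D.card := by
      exact_mod_cast Finset.card_le_card_sdiff_add_card
    have h2 : (D.card : ℝ) ≤ bad.card := by exact_mod_cast hDcard
    linarith
  · intro i hi hcontra
    have hsuppA : supp i ⊆ A := hcontra.trans (Finset.sdiff_subset)
    have hibad : i ∈ bad := Finset.mem_filter.mpr ⟨hi, hsuppA⟩
    have hnei := hne i hi
    have hchoose_mem : hnei.choose ∈ D := by
      rw [hD]
      apply Finset.mem_biUnion.mpr
      exact ⟨i, hibad, by rw [dif_pos hnei]; exact Finset.mem_singleton_self _⟩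
    have : hnei.choose ∈ A \ D := hcontra hnei.choose_spec
    exact (Finset.mem_sdiff.mp this).2 hchoose_mem

abbrev T6 := Line × Line × Line × Line × Line × Line
abbrev T5 := Line × Line × Line × Line × Line

def wcond (a b c d e f : Line) : Prop :=
  a ≠ b ∧ a ≠ c ∧ b ≠ c ∧ d ≠ e ∧ d ≠ f ∧ e ≠ f ∧
  ({a, b, c} : Finset Line) ≠ ({d, e, f} : Finset Line) ∧
  triArea a b c = triArea d e f ∧
  f ∉ ({a, b, c} : Finset Line) ∧
  (e ∈ ({a, b, c} : Finset Line) → d ∈ ({a, b, c} : Finset Line))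

noncomputable def Wset (F' : Finset Line) : Finset T6 :=
  (F' ×ˢ F' ×ˢ F' ×ˢ F' ×ˢ F' ×ˢ F').filter
    (fun w => wcond w.1 w.2.1 w.2.2.1 w.2.2.2.1 w.2.2.2.2.1 w.2.2.2.2.2)

noncomputable def supp6 (w : T6) : Finset Line :=
  {w.1, w.2.1, w.2.2.1, w.2.2.2.1, w.2.2.2.2.1, w.2.2.2.2.2}

noncomputable def rnum (w : T6) : ℕ :=
  (({w.2.2.2.1, w.2.2.2.2.1, w.2.2.2.2.2} : Finset Line) \
    ({w.1, w.2.1, w.2.2.1} : Finset Line)).card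

noncomputable def proj5 (w : T6) : T5 := (w.1, w.2.1, w.2.2.1, w.2.2.2.1, w.2.2.2.2.1)

lemma mem_Wset {F' : Finset Line} {w : T6} : w ∈ Wset F' ↔
    (w.1 ∈ F' ∧ w.2.1 ∈ F' ∧ w.2.2.1 ∈ F' ∧ w.2.2.2.1 ∈ F' ∧ w.2.2.2.2.1 ∈ F' ∧ w.2.2.2.2.2 ∈ F')
    ∧ wcond w.1 w.2.1 w.2.2.1 w.2.2.2.1 w.2.2.2.2.1 w.2.2.2.2.2 := by
  unfold Wset
  rw [Finset.mem_filter]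
  simp only [Finset.mem_product]

lemma card_triple {a b c : Line} (hab : a ≠ b) (hac : a ≠ c) (hbc : b ≠ c) :
    ({a, b, c} : Finset Line).card = 3 := by
  rw [Finset.card_insert_of_notMem (by simp [hab, hac]),
    Finset.card_insert_of_notMem (by simp [hbc]), Finset.card_singleton]

lemma supp6_card {F' : Finset Line} {w : T6} (hw : w ∈ Wset F') :
    (supp6 w).card = 3 + rnum w := by
  obtain ⟨a, b, c, d, e, f⟩ := w
  obtain ⟨-, hcond⟩ := mem_Wset.mp hw
  obtain ⟨hab, hac, hbc, -, -, -, -, -, -, -⟩ := hcond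
  have hu : supp6 (a, b, c, d, e, f) = ({a, b, c} : Finset Line) ∪ ({d, e, f} : Finset Line) := by
    ext x; simp [supp6]; tauto
  rw [hu, ← Finset.union_sdiff_self_eq_union,
    Finset.card_union_of_disjoint Finset.sdiff_disjoint.symm, card_triple hab hac hbc]
  rfl

lemma rnum_bounds {F' : Finset Line} {w : T6} (hw : w ∈ Wset F') :
    1 ≤ rnum w ∧ rnum w ≤ 3 := by
  obtain ⟨a, b, c, d, e, f⟩ := w
  obtain ⟨-, hcond⟩ := mem_Wset.mp hw
  obtain ⟨hab, hac, hbc, hde, hdf, hef, hne, -, -, -⟩ := hcond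
  constructor
  · by_contra h
    push_neg at h
    have h0 : rnum (a, b, c, d, e, f) = 0 := by omega
    have hsub : ({d, e, f} : Finset Line) ⊆ ({a, b, c} : Finset Line) := by
      rw [← Finset.sdiff_eq_empty_iff_subset]
      exact Finset.card_eq_zero.mp h0
    exact hne ((Finset.eq_of_subset_of_card_le hsub
      (by rw [card_triple hab hac hbc, card_triple hde hdf hef])).symm)
  · calc rnum (a, b, c, d, e, f) ≤ ({d, e, f} : Finset Line).card :=
        Finset.card_le_card (Finset.sdiff_subset)
      _ ≤ 3 := by rw [card_triple hde hdf hef]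

lemma rnum_one {F' : Finset Line} {w : T6} (hw : w ∈ Wset F') (h1 : rnum w = 1) :
    w.2.2.2.1 ∈ ({w.1, w.2.1, w.2.2.1} : Finset Line) ∧
    w.2.2.2.2.1 ∈ ({w.1, w.2.1, w.2.2.1} : Finset Line) := by
  obtain ⟨a, b, c, d, e, f⟩ := w
  obtain ⟨-, hcond⟩ := mem_Wset.mp hw
  obtain ⟨hab, hac, hbc, hde, hdf, hef, hne, -, hf, hnorm⟩ := hcond
  have he : e ∈ ({a, b, c} : Finset Line) := by
    by_contra he
    have hsub : ({e, f} : Finset Line) ⊆ ({d, e, f} : Finset Line) \ ({a, b, c} : Finset Line) := by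
      intro x hx
      rw [Finset.mem_insert, Finset.mem_singleton] at hx
      rcases hx with rfl | rfl
      · exact Finset.mem_sdiff.mpr ⟨by simp, he⟩
      · exact Finset.mem_sdiff.mpr ⟨by simp, hf⟩
    have : ({e, f} : Finset Line).card ≤ 1 := h1 ▸ Finset.card_le_card hsub
    rw [Finset.card_pair hef] at this
    omega
  exact ⟨hnorm he, he⟩

lemma rnum_two {F' : Finset Line} {w : T6} (hw : w ∈ Wset F') (h2 : rnum w = 2) :
    w.2.2.2.1 ∈ ({w.1, w.2.1, w.2.2.1} : Finset Line) := by
  obtain ⟨a, b, c, d, e, f⟩ := w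
  obtain ⟨-, hcond⟩ := mem_Wset.mp hw
  obtain ⟨hab, hac, hbc, hde, hdf, hef, hne, -, hf, hnorm⟩ := hcond
  by_contra hd
  have he : e ∉ ({a, b, c} : Finset Line) := fun he => hd (hnorm he)
  have hsub : ({d, e, f} : Finset Line) ⊆ ({d, e, f} : Finset Line) \ ({a, b, c} : Finset Line) := by
    intro x hx
    rw [Finset.mem_insert, Finset.mem_insert, Finset.mem_singleton] at hx
    rcases hx with rfl | rfl | rfl
    · exact Finset.mem_sdiff.mpr ⟨by simp, hd⟩
    · exact Finset.mem_sdiff.mpr ⟨by simp, he⟩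
    · exact Finset.mem_sdiff.mpr ⟨by simp, hf⟩
  have := Finset.card_le_card hsub
  rw [card_triple hde hdf hef] at this
  have : rnum (a, b, c, d, e, f) ≥ 3 := this
  omega

/-- fiber bound: at most 10 witnesses with given first five coordinates -/
lemma fiber_bound {F F' : Finset Line} (hF : NoSixTangentToConic F) (hsub : F' ⊆ F)
    (hnp : ∀ l₁ ∈ F', ∀ l₂ ∈ F', l₁ ≠ l₂ → ¬ l₁.Parallel l₂)
    {W' : Finset T6} (hW' : W' ⊆ Wset F') (q : T5) :
    (W'.filter (fun w => proj5 w = q)).card ≤ 10 := by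
  rcases Finset.eq_empty_or_nonempty (W'.filter (fun w => proj5 w = q)) with hemp | ⟨w₀, hw₀⟩
  · rw [hemp]; simp
  obtain ⟨qa, qb, qc, qd, qe⟩ := q
  rw [Finset.mem_filter] at hw₀
  obtain ⟨hw₀W, hw₀q⟩ := hw₀
  have hw₀set := hW' hw₀W
  obtain ⟨hmem₀, hcond₀⟩ := mem_Wset.mp hw₀set
  -- d, e are in F' and distinct
  obtain ⟨w1, w2, w3, w4, w5, w6⟩ := w₀
  simp only [proj5, Prod.mk.injEq] at hw₀q
  obtain ⟨rfl, rfl, rfl, rfl, rfl⟩ := hw₀q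
  have hde : ¬ w4.Parallel w5 := hnp _ hmem₀.2.2.2.1 _ hmem₀.2.2.2.2.1 hcond₀.2.2.2.1
  set v := triArea w1 w2 w3 with hv
  apply le_trans (Finset.card_le_card_of_injOn (fun w => w.2.2.2.2.2)
    (t := F.filter (fun N => ¬ w4.Parallel N ∧ ¬ w5.Parallel N ∧ triArea w4 w5 N = v)) ?_ ?_)
    (card_third_le hF hde v)
  · intro w hw
    rw [Finset.mem_coe, Finset.mem_filter] at hw
    obtain ⟨hwW, hwq⟩ := hw
    have hwset := hW' hwW
    obtain ⟨u1, u2, u3, u4, u5, u6⟩ := w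
    simp only [proj5, Prod.mk.injEq] at hwq
    obtain ⟨rfl, rfl, rfl, rfl, rfl⟩ := hwq
    obtain ⟨hmem, hcond⟩ := mem_Wset.mp hwset
    rw [Finset.mem_coe, Finset.mem_filter]
    refine ⟨hsub hmem.2.2.2.2.2, ?_, ?_, ?_⟩
    · exact hnp _ hmem.2.2.2.1 _ hmem.2.2.2.2.2 hcond.2.2.2.2.1
    · exact hnp _ hmem.2.2.2.2.1 _ hmem.2.2.2.2.2 hcond.2.2.2.2.2.1
    · rw [← hcond.2.2.2.2.2.2.2.1]
  · intro w hw w' hw' heq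
    rw [Finset.mem_coe, Finset.mem_filter] at hw hw'
    obtain ⟨u1, u2, u3, u4, u5, u6⟩ := w
    obtain ⟨z1, z2, z3, z4, z5, z6⟩ := w'
    simp only [proj5, Prod.mk.injEq] at hw hw'
    obtain ⟨-, rfl, rfl, rfl, rfl, rfl⟩ := hw
    obtain ⟨-, rfl, rfl, rfl, rfl, rfl⟩ := hw'
    simp only at heq
    rw [heq]

lemma card_triple_le (x y z : Line) : ({x, y, z} : Finset Line).card ≤ 3 := by
  apply le_trans (Finset.card_insert_le _ _)
  have := Finset.card_insert_le y ({z} : Finset Line)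
  simp at this ⊢
  omega

lemma part_card_le {F F' : Finset Line} (hF : NoSixTangentToConic F) (hsub : F' ⊆ F)
    (hnp : ∀ l₁ ∈ F', ∀ l₂ ∈ F', l₁ ≠ l₂ → ¬ l₁.Parallel l₂)
    {W' : Finset T6} (hW' : W' ⊆ Wset F') :
    W'.card ≤ 10 * (W'.image proj5).card :=
  Finset.card_le_mul_card_image W' 10 (fun q _ => fiber_bound hF hsub hnp hW' q)

lemma image1_le {F' : Finset Line} :
    (((Wset F').filter (fun w => rnum w = 1)).image proj5).card ≤ 9 * F'.card ^ 3 := by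
  set B1 := (F' ×ˢ F' ×ˢ F').biUnion (fun t =>
    ((({t.1, t.2.1, t.2.2} : Finset Line)) ×ˢ (({t.1, t.2.1, t.2.2} : Finset Line))).image
      (fun u => (t.1, t.2.1, t.2.2, u.1, u.2))) with hB1
  have hsub : ((Wset F').filter (fun w => rnum w = 1)).image proj5 ⊆ B1 := by
    intro q hq
    obtain ⟨w, hw, rfl⟩ := Finset.mem_image.mp hq
    rw [Finset.mem_filter] at hw
    obtain ⟨hwW, hr⟩ := hw
    obtain ⟨hd, he⟩ := rnum_one hwW hr
    obtain ⟨hmem, -⟩ := mem_Wset.mp hwW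
    apply Finset.mem_biUnion.mpr
    refine ⟨(w.1, w.2.1, w.2.2.1), ?_, ?_⟩
    · simp only [Finset.mem_product]
      exact ⟨hmem.1, hmem.2.1, hmem.2.2.1⟩
    · exact Finset.mem_image.mpr ⟨(w.2.2.2.1, w.2.2.2.2.1),
        Finset.mem_product.mpr ⟨hd, he⟩, rfl⟩
  apply le_trans (Finset.card_le_card hsub)
  apply le_trans (Finset.card_biUnion_le)
  calc ∑ t ∈ F' ×ˢ F' ×ˢ F', _ ≤ ∑ _t ∈ F' ×ˢ F' ×ˢ F', 9 := by
        apply Finset.sum_le_sum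
        intro t _
        apply le_trans (Finset.card_image_le)
        rw [Finset.card_product]
        exact Nat.mul_le_mul (card_triple_le _ _ _) (card_triple_le _ _ _)
    _ = 9 * F'.card ^ 3 := by
        rw [Finset.sum_const, smul_eq_mul, Finset.card_product, Finset.card_product]
        ring

lemma image2_le {F' : Finset Line} {W' : Finset T6} (hW' : W' ⊆ Wset F')
    (hr : ∀ w ∈ W', rnum w = 2) :
    (W'.image proj5).card ≤ 3 * F'.card ^ 4 := by
  set B2 := (F' ×ˢ F' ×ˢ F' ×ˢ F').biUnion (fun t =>
    (({t.1, t.2.1, t.2.2.1} : Finset Line)).image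
      (fun x => (t.1, t.2.1, t.2.2.1, x, t.2.2.2))) with hB2
  have hsub : W'.image proj5 ⊆ B2 := by
    intro q hq
    obtain ⟨w, hw, rfl⟩ := Finset.mem_image.mp hq
    have hd := rnum_two (hW' hw) (hr w hw)
    obtain ⟨hmem, -⟩ := mem_Wset.mp (hW' hw)
    apply Finset.mem_biUnion.mpr
    refine ⟨(w.1, w.2.1, w.2.2.1, w.2.2.2.2.1), ?_, ?_⟩
    · simp only [Finset.mem_product]
      exact ⟨hmem.1, hmem.2.1, hmem.2.2.1, hmem.2.2.2.2.1⟩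
    · exact Finset.mem_image.mpr ⟨w.2.2.2.1, hd, rfl⟩
  apply le_trans (Finset.card_le_card hsub)
  apply le_trans (Finset.card_biUnion_le)
  calc ∑ t ∈ F' ×ˢ F' ×ˢ F' ×ˢ F', _ ≤ ∑ _t ∈ F' ×ˢ F' ×ˢ F' ×ˢ F', 3 := by
        apply Finset.sum_le_sum
        intro t _
        exact le_trans (Finset.card_image_le) (card_triple_le _ _ _)
    _ = 3 * F'.card ^ 4 := by
        rw [Finset.sum_const, smul_eq_mul, Finset.card_product, Finset.card_product,
          Finset.card_product]
        ring

lemma image3_le {F' : Finset Line} {W' : Finset T6} (hW' : W' ⊆ Wset F') :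
    (W'.image proj5).card ≤ F'.card ^ 5 := by
  have hsub : W'.image proj5 ⊆ F' ×ˢ F' ×ˢ F' ×ˢ F' ×ˢ F' := by
    intro q hq
    obtain ⟨w, hw, rfl⟩ := Finset.mem_image.mp hq
    obtain ⟨hmem, -⟩ := mem_Wset.mp (hW' hw)
    simp only [proj5, Finset.mem_product]
    exact ⟨hmem.1, hmem.2.1, hmem.2.2.1, hmem.2.2.2.1, hmem.2.2.2.2.1⟩
  apply le_trans (Finset.card_le_card hsub)
  rw [Finset.card_product, Finset.card_product, Finset.card_product, Finset.card_product]
  exact le_of_eq (by ring)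

lemma sum_weight_bound {F F' : Finset Line} (hF : NoSixTangentToConic F) (hsub : F' ⊆ F)
    (hnp : ∀ l₁ ∈ F', ∀ l₂ ∈ F', l₁ ≠ l₂ → ¬ l₁.Parallel l₂) (p : ℝ) (hp : 0 ≤ p) :
    ∑ w ∈ Wset F', p ^ (supp6 w).card ≤
      90 * (F'.card : ℝ) ^ 3 * p ^ 4 + 30 * (F'.card : ℝ) ^ 4 * p ^ 5 +
        10 * (F'.card : ℝ) ^ 5 * p ^ 6 := by
  classical
  set W := Wset F' with hW
  set W1 := W.filter (fun w => rnum w = 1) with hW1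
  set Wr := W.filter (fun w => ¬ rnum w = 1) with hWr
  set W2 := Wr.filter (fun w => rnum w = 2) with hW2
  set W3 := Wr.filter (fun w => ¬ rnum w = 2) with hW3
  have hW1W : W1 ⊆ W := Finset.filter_subset _ _
  have hWrW : Wr ⊆ W := Finset.filter_subset _ _
  have hW2W : W2 ⊆ W := (Finset.filter_subset _ _).trans hWrW
  have hW3W : W3 ⊆ W := (Finset.filter_subset _ _).trans hWrW
  have hsplit : ∑ w ∈ W, p ^ (supp6 w).card =
      (∑ w ∈ W1, p ^ (supp6 w).card) + ((∑ w ∈ W2, p ^ (supp6 w).card)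
        + (∑ w ∈ W3, p ^ (supp6 w).card)) := by
    rw [hW1, hW2, hW3, hWr,
      Finset.sum_filter_add_sum_filter_not (Finset.filter (fun w => ¬ rnum w = 1) W)
        (fun w => rnum w = 2),
      Finset.sum_filter_add_sum_filter_not W (fun w => rnum w = 1)]
  rw [hsplit]
  have hs1 : ∑ w ∈ W1, p ^ (supp6 w).card = (W1.card : ℝ) * p ^ 4 := by
    rw [Finset.sum_congr rfl (fun w hw => ?_), Finset.sum_const, nsmul_eq_mul]
    rw [supp6_card (hW1W hw), (Finset.mem_filter.mp hw).2]
  have hs2 : ∑ w ∈ W2, p ^ (supp6 w).card = (W2.card : ℝ) * p ^ 5 := by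
    rw [Finset.sum_congr rfl (fun w hw => ?_), Finset.sum_const, nsmul_eq_mul]
    rw [supp6_card (hW2W hw), (Finset.mem_filter.mp hw).2]
  have hs3 : ∑ w ∈ W3, p ^ (supp6 w).card = (W3.card : ℝ) * p ^ 6 := by
    rw [Finset.sum_congr rfl (fun w hw => ?_), Finset.sum_const, nsmul_eq_mul]
    have h3 : rnum w = 3 := by
      have hb := rnum_bounds (hW3W hw)
      have h1 := (Finset.mem_filter.mp ((Finset.filter_subset _ _) hw)).2
      have h2 := (Finset.mem_filter.mp hw).2
      omega
    rw [supp6_card (hW3W hw), h3]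
  rw [hs1, hs2, hs3]
  have hc1 : (W1.card : ℝ) ≤ 90 * (F'.card : ℝ) ^ 3 := by
    have := le_trans (part_card_le hF hsub hnp hW1W)
      (Nat.mul_le_mul_left 10 (image1_le (F' := F')))
    calc (W1.card : ℝ) ≤ ((10 * (9 * F'.card ^ 3) : ℕ) : ℝ) := by exact_mod_cast this
      _ = 90 * (F'.card : ℝ) ^ 3 := by push_cast; ring
  have hc2 : (W2.card : ℝ) ≤ 30 * (F'.card : ℝ) ^ 4 := by
    have h2 := image2_le hW2W (fun w hw => (Finset.mem_filter.mp hw).2)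
    have := le_trans (part_card_le hF hsub hnp hW2W) (Nat.mul_le_mul_left 10 h2)
    calc (W2.card : ℝ) ≤ ((10 * (3 * F'.card ^ 4) : ℕ) : ℝ) := by exact_mod_cast this
      _ = 30 * (F'.card : ℝ) ^ 4 := by push_cast; ring
  have hc3 : (W3.card : ℝ) ≤ 10 * (F'.card : ℝ) ^ 5 := by
    have := le_trans (part_card_le hF hsub hnp hW3W)
      (Nat.mul_le_mul_left 10 (image3_le hW3W))
    calc (W3.card : ℝ) ≤ ((10 * F'.card ^ 5 : ℕ) : ℝ) := by exact_mod_cast this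
      _ = 10 * (F'.card : ℝ) ^ 5 := by push_cast; ring
  have hp4 : (0:ℝ) ≤ p ^ 4 := by positivity
  have hp5 : (0:ℝ) ≤ p ^ 5 := by positivity
  have hp6 : (0:ℝ) ≤ p ^ 6 := by positivity
  nlinarith [mul_le_mul_of_nonneg_right hc1 hp4, mul_le_mul_of_nonneg_right hc2 hp5,
    mul_le_mul_of_nonneg_right hc3 hp6]

lemma tri_set_perm1 (d e f : Line) : ({d, f, e} : Finset Line) = {d, e, f} := by
  ext x; simp; tauto
lemma tri_set_perm2 (d e f : Line) : ({e, f, d} : Finset Line) = {d, e, f} := by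
  ext x; simp; tauto
lemma tri_set_perm3 (d e f : Line) : ({e, d, f} : Finset Line) = {d, e, f} := by
  ext x; simp; tauto
lemma tri_set_perm4 (d e f : Line) : ({f, d, e} : Finset Line) = {d, e, f} := by
  ext x; simp; tauto

lemma mk_witness {F' S : Finset Line} (hS : S ⊆ F')
    (hnb : ∀ w ∈ Wset F', ¬ supp6 w ⊆ S)
    {a b c d e f : Line} (ha : a ∈ S) (hb : b ∈ S) (hc : c ∈ S) (hd : d ∈ S) (he : e ∈ S)
    (hf : f ∈ S) (hcond : wcond a b c d e f) : False := by
  apply hnb (a, b, c, d, e, f)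
  · exact mem_Wset.mpr ⟨⟨hS ha, hS hb, hS hc, hS hd, hS he, hS hf⟩, hcond⟩
  · intro x hx
    simp only [supp6, Finset.mem_insert, Finset.mem_singleton] at hx
    rcases hx with rfl | rfl | rfl | rfl | rfl | rfl
    exacts [ha, hb, hc, hd, he, hf]

lemma capture {F' S : Finset Line} (hS : S ⊆ F')
    (hnb : ∀ w ∈ Wset F', ¬ supp6 w ⊆ S) :
    ∀ a ∈ S, ∀ b ∈ S, ∀ c ∈ S, ∀ d ∈ S, ∀ e ∈ S, ∀ f ∈ S,
      a ≠ b → a ≠ c → b ≠ c → d ≠ e → d ≠ f → e ≠ f →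
      ({a, b, c} : Finset Line) ≠ ({d, e, f} : Finset Line) →
      triArea a b c ≠ triArea d e f := by
  intro a ha b hb c hc d hd e he f hf hab hac hbc hde hdf hef hsets heq
  by_cases hdm : d ∈ ({a, b, c} : Finset Line) <;>
    by_cases hem : e ∈ ({a, b, c} : Finset Line) <;>
    by_cases hfm : f ∈ ({a, b, c} : Finset Line)
  · -- all in: sets equal, contradiction
    apply hsets
    symm
    apply Finset.eq_of_subset_of_card_le
    · intro x hx
      simp only [Finset.mem_insert, Finset.mem_singleton] at hx
      rcases hx with rfl | rfl | rfl
      exacts [hdm, hem, hfm]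
    · rw [card_triple hab hac hbc, card_triple hde hdf hef]
  · exact mk_witness hS hnb ha hb hc hd he hf
      ⟨hab, hac, hbc, hde, hdf, hef, hsets, heq, hfm, fun _ => hdm⟩
  · exact mk_witness hS hnb ha hb hc hd hf he
      ⟨hab, hac, hbc, hdf, hde, fun h => hef h.symm,
        by rw [tri_set_perm1 d e f]; exact hsets,
        heq.trans (triArea_swap23 d e f), hem, fun _ => hdm⟩
  · exact mk_witness hS hnb ha hb hc hd he hf
      ⟨hab, hac, hbc, hde, hdf, hef, hsets, heq, hfm, fun h => absurd h hem⟩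
  · exact mk_witness hS hnb ha hb hc he hf hd
      ⟨hab, hac, hbc, hef, fun h => hde h.symm, fun h => hdf h.symm,
        by rw [tri_set_perm2 d e f]; exact hsets,
        heq.trans (triArea_cyc d e f), hdm, fun _ => hem⟩
  · exact mk_witness hS hnb ha hb hc he hd hf
      ⟨hab, hac, hbc, fun h => hde h.symm, hef, hdf,
        by rw [tri_set_perm3 d e f]; exact hsets,
        heq.trans (triArea_swap12 d e f), hfm, fun _ => hem⟩
  · exact mk_witness hS hnb ha hb hc hf hd he
      ⟨hab, hac, hbc, fun h => hdf h.symm, fun h => hef h.symm, hde,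
        by rw [tri_set_perm4 d e f]; exact hsets,
        heq.trans ((triArea_cyc d e f).trans (triArea_cyc e f d)), hem, fun h => absurd h hdm⟩
  · exact mk_witness hS hnb ha hb hc hd he hf
      ⟨hab, hac, hbc, hde, hdf, hef, hsets, heq, hfm, fun h => absurd h hem⟩

end St15

/-- There is a constant `C > 0` such that any arrangement of `n` lines with no
six of them tangent to a common conic (in particular no six mutually parallel
and no six concurrent) contains at least `C·n^{1/5}` lines, pairwise
non-parallel, all of whose triples determine triangles of pairwise distinct
areas (a concurrent triple counting as area `0`). -/
theorem stmt15 :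
    ∃ C : ℝ, 0 < C ∧
      ∀ (n : ℕ) (L : Finset Line), L.card = n → NoSixTangentToConic L →
        ∃ S ⊆ L, C * (n : ℝ) ^ ((1 : ℝ) / 5) ≤ S.card ∧
          (∀ l₁ ∈ S, ∀ l₂ ∈ S, l₁ ≠ l₂ → ¬ Line.Parallel l₁ l₂) ∧
          ∀ a ∈ S, ∀ b ∈ S, ∀ c ∈ S, ∀ d ∈ S, ∀ e ∈ S, ∀ f ∈ S,
            a ≠ b → a ≠ c → b ≠ c → d ≠ e → d ≠ f → e ≠ f →
            ({a, b, c} : Finset Line) ≠ ({d, e, f} : Finset Line) →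
            triArea a b c ≠ triArea d e f := by
  classical
  refine ⟨1/36, by norm_num, ?_⟩
  intro n L hcard hF
  rcases Nat.eq_zero_or_pos n with hn | hn
  · refine ⟨∅, Finset.empty_subset _, ?_, by simp, by simp⟩
    subst hn
    simp [Real.zero_rpow (by norm_num : (1:ℝ)/5 ≠ 0)]
  · obtain ⟨F', hsubF, hcard5, hnp⟩ := St15.extract_dirs hF
    have hN1 : 1 ≤ F'.card := by omega
    have hNr1 : (1:ℝ) ≤ (F'.card : ℝ) := by exact_mod_cast hN1
    have hNr0 : (0:ℝ) < (F'.card : ℝ) := by linarith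
    set q : ℝ := (F'.card : ℝ) ^ (-(1/5) : ℝ) with hq
    have hq0 : 0 < q := Real.rpow_pos_of_pos hNr0 _
    have hq1 : q ≤ 1 := Real.rpow_le_one_of_one_le_of_nonpos hNr1 (by norm_num)
    have hkey : (F'.card : ℝ) * q ^ 5 = 1 := by
      have h5 : q ^ (5:ℕ) = (F'.card : ℝ) ^ ((-(1/5) : ℝ) * 5) := by
        rw [hq, ← Real.rpow_natCast ((F'.card : ℝ) ^ (-(1/5):ℝ)) 5,
          ← Real.rpow_mul (le_of_lt hNr0)]
        norm_num
      rw [h5, show (-(1/5):ℝ) * 5 = -1 by norm_num, Real.rpow_neg_one]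
      exact mul_inv_cancel₀ (ne_of_gt hNr0)
    set p : ℝ := q ^ 4 / 9 with hp
    have hp0 : 0 < p := by positivity
    have hp1 : p < 1 := by
      have hq4 : q ^ 4 ≤ 1 := pow_le_one₀ (le_of_lt hq0) hq1
      rw [hp]; linarith
    have hsupp : ∀ w ∈ St15.Wset F', St15.supp6 w ⊆ F' := by
      intro w hw x hx
      obtain ⟨hmem, -⟩ := St15.mem_Wset.mp hw
      simp only [St15.supp6, Finset.mem_insert, Finset.mem_singleton] at hx
      rcases hx with rfl | rfl | rfl | rfl | rfl | rfl
      exacts [hmem.1, hmem.2.1, hmem.2.2.1, hmem.2.2.2.1, hmem.2.2.2.2.1, hmem.2.2.2.2.2]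
    have hnemp : ∀ w ∈ St15.Wset F', (St15.supp6 w).Nonempty := by
      intro w _
      exact ⟨w.1, by simp [St15.supp6]⟩
    obtain ⟨S, hSsub, hScard, hSnb⟩ :=
      St15.averaging F' (St15.Wset F') St15.supp6 p hp0 hp1 hsupp hnemp
    have hsum := St15.sum_weight_bound hF hsubF hnp p (le_of_lt hp0)
    have hhalf : 90 * ((F'.card : ℝ)) ^ 3 * p ^ 4 + 30 * ((F'.card : ℝ)) ^ 4 * p ^ 5 +
        10 * ((F'.card : ℝ)) ^ 5 * p ^ 6 ≤ p * (F'.card : ℝ) / 2 := by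
      rw [hp]
      apply le_of_mul_le_mul_right _ hq0
      have e1 : (90 * ((F'.card : ℝ)) ^ 3 * (q^4/9) ^ 4 + 30 * ((F'.card : ℝ)) ^ 4 * (q^4/9) ^ 5 +
          10 * ((F'.card : ℝ)) ^ 5 * (q^4/9) ^ 6) * q
          = (90/6561) * q^2 * ((F'.card : ℝ) * q^5)^3 + (30/59049) * q * ((F'.card : ℝ) * q^5)^4
            + (10/531441) * ((F'.card : ℝ) * q^5)^5 := by ring
      have e2 : ((q^4/9) * (F'.card : ℝ) / 2) * q = ((F'.card : ℝ) * q^5) / 18 := by ring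
      rw [e1, e2, hkey]
      nlinarith [hq0, hq1, sq_nonneg q]
    have hScard2 : p * (F'.card : ℝ) / 2 ≤ (S.card : ℝ) := by linarith
    have hq4N : q ^ 4 * (F'.card : ℝ) = (F'.card : ℝ) ^ ((1:ℝ)/5) := by
      have h4 : q ^ (4:ℕ) = (F'.card : ℝ) ^ ((-(1/5) : ℝ) * 4) := by
        rw [hq, ← Real.rpow_natCast ((F'.card : ℝ) ^ (-(1/5):ℝ)) 4,
          ← Real.rpow_mul (le_of_lt hNr0)]
        norm_num
      rw [h4]
      calc (F'.card : ℝ) ^ ((-(1/5) : ℝ) * 4) * (F'.card : ℝ)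
          = (F'.card : ℝ) ^ ((-(1/5) : ℝ) * 4) * (F'.card : ℝ) ^ (1:ℝ) := by
            rw [Real.rpow_one]
        _ = (F'.card : ℝ) ^ ((-(1/5) : ℝ) * 4 + 1) := (Real.rpow_add hNr0 _ _).symm
        _ = (F'.card : ℝ) ^ ((1:ℝ)/5) := by norm_num
    have hfinal : (1/36 : ℝ) * (n : ℝ) ^ ((1:ℝ)/5) ≤ (S.card : ℝ) := by
      have hn32 : (n : ℝ) ≤ 32 * (F'.card : ℝ) := by
        have h5n : (n : ℕ) ≤ 5 * F'.card := hcard ▸ hcard5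
        have h5r : (n : ℝ) ≤ 5 * (F'.card : ℝ) := by exact_mod_cast h5n
        linarith
      have hmono : (n : ℝ) ^ ((1:ℝ)/5) ≤ (32 * (F'.card : ℝ)) ^ ((1:ℝ)/5) :=
        Real.rpow_le_rpow (Nat.cast_nonneg n) hn32 (by norm_num)
      have hmul : (32 * (F'.card : ℝ)) ^ ((1:ℝ)/5) = 2 * (F'.card : ℝ) ^ ((1:ℝ)/5) := by
        rw [Real.mul_rpow (by norm_num) (le_of_lt hNr0)]
        congr 1
        rw [show (32:ℝ) = (2:ℝ) ^ (5:ℕ) by norm_num, ← Real.rpow_natCast (2:ℝ) 5,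
          ← Real.rpow_mul (by norm_num)]
        norm_num
      have hpn : p * (F'.card : ℝ) / 2 = (F'.card : ℝ) ^ ((1:ℝ)/5) / 18 := by
        rw [hp, ← hq4N]; ring
      rw [hpn] at hScard2
      rw [hmul] at hmono
      linarith
    refine ⟨S, hSsub.trans hsubF, hfinal, ?_, ?_⟩
    · intro l₁ h₁ l₂ h₂ hne
      exact hnp l₁ (hSsub h₁) l₂ (hSsub h₂) hne
    · exact St15.capture hSsub hSnb
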